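/- In the sand-Potts random cluster measure φ_p^4 with boundary value 4, the conditional probability that any edge e is open, given the configuration on all other edges, is at least p/(7-6p). -/

import Mathlib

open scoped Classical

/-- Lattice sites of `ℤ²`. -/
abbrev Site := ℤ × ℤ

/-- Nearest-neighbor adjacency on `ℤ²`. -/
def adjacent (x y : Site) : Prop :=
  (x.1 - y.1).natAbs + (x.2 - y.2).natAbs = 1

instance (x y : Site) : Decidable (adjacent x y) :=
  inferInstanceAs (Decidable (_ = 1))

/-- The four nearest neighbors of a site. -/
def nbhd (x : Site) : Finset Site :=
  {(x.1 + 1, x.2), (x.1 - 1, x.2), (x.1, x.2 + 1), (x.1, x.2 - 1)}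

/-- Number of neighbors of `x` inside `A`. -/
def nbrs (A : Finset Site) (x : Site) : ℕ :=
  (A.filter fun y => adjacent x y).card

/-- One step of the burning algorithm: remove every site whose height
exceeds its number of remaining neighbors. -/
def burnStep (η : Site → ℕ) (A : Finset Site) : Finset Site :=
  A.filter fun x => η x ≤ nbrs A x

/-- A configuration is burnable (recurrent) on `V` iff iterating the burning
step starting from `V` eventually removes all sites. -/
def Burnable (V : Finset Site) (η : Site → ℕ) : Prop :=
  ∃ k, (burnStep η)^[k] V = ∅

/-- The square `[-n,n]² ∩ ℤ²`. -/
noncomputable def box (n : ℕ) : Finset Site :=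
  Finset.Icc (-(n : ℤ)) n ×ˢ Finset.Icc (-(n : ℤ)) n

/-- Exterior nearest-neighbor boundary of `V`. -/
def extBoundary (V : Finset Site) : Finset Site :=
  (V.biUnion nbhd) \ V

/-- `V ∪ ∂V`. -/
def closureV (V : Finset Site) : Finset Site := V ∪ extBoundary V

/-- `x` and `y` are connected by a nearest-neighbor path inside `S`. -/
def ConnIn (S : Set Site) (x y : Site) : Prop :=
  Relation.ReflTransGen (fun u v => adjacent u v ∧ u ∈ S ∧ v ∈ S) x y

/-- A finite subset of `ℤ²` is simply connected: it is connected and its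
complement is connected. -/
def SimplyConnected (V : Finset Site) : Prop :=
  (∀ x ∈ V, ∀ y ∈ V, ConnIn (↑V) x y) ∧
  (∀ x y : Site, x ∉ V → y ∉ V → ConnIn {z | z ∉ V} x y)

/-- Height configurations on `box n`: value `v : Fin 4` encodes height `v+1`. -/
abbrev Cfg (n : ℕ) := {x : Site // x ∈ box n} → Fin 4

/-- Extension of a configuration on `box n` to all of `ℤ²`, with boundary
height `a` outside the box. -/
noncomputable def extCfg (n : ℕ) (a : ℕ) (η : Cfg n) : Site → ℕ :=
  fun x => if h : x ∈ box n then (η ⟨x, h⟩ : ℕ) + 1 else a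

/-- Number of configurations on `box n` satisfying `P` (counting measure). -/
noncomputable def cnt (n : ℕ) (P : Cfg n → Prop) : ℕ :=
  (Finset.univ.filter P).card

/-- Canonically oriented nearest-neighbor edge (pointing right or up). -/
def canonEdge (e : Site × Site) : Prop :=
  e.2 = (e.1.1 + 1, e.1.2) ∨ e.2 = (e.1.1, e.1.2 + 1)

instance (e : Site × Site) : Decidable (canonEdge e) :=
  inferInstanceAs (Decidable (_ ∨ _))

/-- The edge set `B`: nearest-neighbor bonds with at least one endpoint in
`box n` (endpoints in `box n ∪ ∂(box n)`). -/
noncomputable def bonds (n : ℕ) : Finset (Site × Site) :=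
  ((closureV (box n)) ×ˢ (closureV (box n))).filter
    fun e => canonEdge e ∧ (e.1 ∈ box n ∨ e.2 ∈ box n)

/-- Bond configurations on the edge set `B`. -/
abbrev BondCfg (n : ℕ) := {e : Site × Site // e ∈ bonds n} → Bool

/-- One step of connectivity: an open bond, or the wiring of the boundary
(all boundary sites belong to one cluster). -/
def wiredAdj (n : ℕ) (σ : BondCfg n) (x y : Site) : Prop :=
  (∃ h : (x, y) ∈ bonds n, σ ⟨(x, y), h⟩ = true) ∨
  (∃ h : (y, x) ∈ bonds n, σ ⟨(y, x), h⟩ = true) ∨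
  (x ∈ extBoundary (box n) ∧ y ∈ extBoundary (box n))

/-- `x` and `y` lie in the same cluster of `σ` (boundary wired). -/
def wiredConn (n : ℕ) (σ : BondCfg n) (x y : Site) : Prop :=
  Relation.ReflTransGen (wiredAdj n σ) x y

/-- `η` (with boundary height `a`) is constant on the clusters of `σ`. -/
def ConstOnClusters (n : ℕ) (a : ℕ) (σ : BondCfg n) (η : Cfg n) : Prop :=
  ∀ x y, wiredConn n σ x y → extCfg n a η x = extCfg n a η y

/-- `k(n,a;σ)`: the number of recurrent configurations constant on the
clusters of `σ` and equal to `a` on the cluster of the boundary. -/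
noncomputable def kcount (n : ℕ) (a : ℕ) (σ : BondCfg n) : ℕ :=
  (Finset.univ.filter fun η : Cfg n =>
    Burnable (box n) (extCfg n a η) ∧ ConstOnClusters n a σ η).card

/-- Bernoulli edge weight `∏ₑ p^{σ(e)} (1-p)^{1-σ(e)}`. -/
noncomputable def bweight (n : ℕ) (p : ℝ) (σ : BondCfg n) : ℝ :=
  ∏ e : {e : Site × Site // e ∈ bonds n}, (if σ e then p else 1 - p)

/-- Unnormalized weight of the sand-Potts random cluster measure `φ_p^a`. -/
noncomputable def rcWeight (n a : ℕ) (p : ℝ) (σ : BondCfg n) : ℝ :=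
  bweight n p σ * kcount n a σ

section SevenToOne

/-! ### Burnability lemmas -/

lemma nbrs_mono {A B : Finset Site} (h : A ⊆ B) (x : Site) : nbrs A x ≤ nbrs B x :=
  Finset.card_le_card (Finset.filter_subset_filter _ h)

lemma burnStep_mono {η η' : Site → ℕ} (hη : ∀ x, η x ≤ η' x) {A B : Finset Site}
    (hAB : A ⊆ B) : burnStep η' A ⊆ burnStep η B := by
  intro x hx
  simp only [burnStep, Finset.mem_filter] at hx ⊢
  exact ⟨hAB hx.1, le_trans (hη x) (hx.2.trans (nbrs_mono hAB x))⟩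

lemma burnable_mono {η η' : Site → ℕ} (hη : ∀ x, η x ≤ η' x) {V : Finset Site}
    (h : Burnable V η) : Burnable V η' := by
  obtain ⟨k, hk⟩ := h
  refine ⟨k, Finset.subset_empty.mp ?_⟩
  have key : ∀ m, (burnStep η')^[m] V ⊆ (burnStep η)^[m] V := by
    intro m
    induction m with
    | zero => simp
    | succ m ih =>
      rw [Function.iterate_succ_apply', Function.iterate_succ_apply']
      exact burnStep_mono hη ih
  calc (burnStep η')^[k] V ⊆ (burnStep η)^[k] V := key k
    _ = ∅ := hk

lemma adjacent_cases {x y : Site} (h : adjacent x y) :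
    y = (x.1 + 1, x.2) ∨ y = (x.1 - 1, x.2) ∨ y = (x.1, x.2 + 1) ∨ y = (x.1, x.2 - 1) := by
  unfold adjacent at h
  simp only [Prod.ext_iff]
  omega

lemma burnStep_four_ssubset (A : Finset Site) (hA : A.Nonempty) :
    burnStep (fun _ => 4) A ⊂ A := by
  obtain ⟨x, hx, hmax⟩ := A.exists_max_image (fun z => z.1 + z.2) hA
  refine (Finset.ssubset_iff_of_subset (Finset.filter_subset _ _)).mpr ⟨x, hx, ?_⟩
  simp only [burnStep, Finset.mem_filter, not_and, not_le]
  intro _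
  unfold nbrs
  have hsub : A.filter (fun y => adjacent x y) ⊆ {(x.1 - 1, x.2), (x.1, x.2 - 1)} := by
    intro y hy
    simp only [Finset.mem_filter] at hy
    have h2 : y.1 + y.2 ≤ x.1 + x.2 := hmax y hy.1
    have h3 := hy.2
    unfold adjacent at h3
    simp only [Finset.mem_insert, Finset.mem_singleton, Prod.ext_iff]
    omega
  have h1 := Finset.card_le_card hsub
  have h2 : ({(x.1 - 1, x.2), (x.1, x.2 - 1)} : Finset Site).card ≤ 2 :=
    (Finset.card_insert_le _ _).trans (by simp)
  omega

lemma burnable_four (A : Finset Site) : Burnable A (fun _ => 4) := by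
  induction A using Finset.strongInduction with
  | _ A ih =>
    rcases Finset.eq_empty_or_nonempty A with rfl | hA
    · exact ⟨0, rfl⟩
    · obtain ⟨k, hk⟩ := ih _ (burnStep_four_ssubset A hA)
      exact ⟨k + 1, by rw [Function.iterate_succ_apply]; exact hk⟩

/-! ### extCfg bounds -/

lemma extCfg_pos (n : ℕ) (η : Cfg n) (x : Site) : 1 ≤ extCfg n 4 η x := by
  unfold extCfg; split <;> omega

lemma extCfg_le_four (n : ℕ) (η : Cfg n) (x : Site) : extCfg n 4 η x ≤ 4 := by
  unfold extCfg; split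
  · have := (η ⟨x, by assumption⟩).isLt; omega
  · omega

lemma kcount_pos (n : ℕ) (σ : BondCfg n) : 1 ≤ kcount n 4 σ := by
  have hmem : (fun _ => (3 : Fin 4) : Cfg n) ∈ Finset.univ.filter fun η : Cfg n =>
      Burnable (box n) (extCfg n 4 η) ∧ ConstOnClusters n 4 σ η := by
    have hconst : extCfg n 4 (fun _ => (3 : Fin 4)) = fun _ => 4 := by
      funext x; unfold extCfg; split <;> rfl
    refine Finset.mem_filter.mpr ⟨Finset.mem_univ _, ?_, ?_⟩
    · rw [hconst]; exact burnable_four _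
    · intro x y _; rw [hconst]

  exact Finset.card_pos.mpr ⟨_, hmem⟩
/-! ### Cluster lemmas -/

lemma wiredAdj_symm (n : ℕ) (σ : BondCfg n) : Symmetric (wiredAdj n σ) := by
  intro x y h
  rcases h with h | h | h
  · exact Or.inr (Or.inl h)
  · exact Or.inl h
  · exact Or.inr (Or.inr ⟨h.2, h.1⟩)

lemma wiredConn_symm (n : ℕ) (σ : BondCfg n) {x y : Site} (h : wiredConn n σ x y) :
    wiredConn n σ y x := by
  induction h with
  | refl => exact Relation.ReflTransGen.refl
  | tail _ hab ih => exact Relation.ReflTransGen.head (wiredAdj_symm n σ hab) ih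

/-! ### The seven-to-one bound -/

lemma seven_to_one (n : ℕ) (σ : BondCfg n) (e : {e : Site × Site // e ∈ bonds n}) :
    kcount n 4 (Function.update σ e false) ≤ 7 * kcount n 4 (Function.update σ e true) := by
  classical
  set σ0 := Function.update σ e false with hσ0
  set σ1 := Function.update σ e true with hσ1
  set C : Site → Prop := fun x => wiredConn n σ0 x e.val.1 ∨ wiredConn n σ0 x e.val.2 with hC
  have hCe1 : C e.val.1 := Or.inl Relation.ReflTransGen.refl
  have hCe2 : C e.val.2 := Or.inr Relation.ReflTransGen.refl
  have hCinv : ∀ {x y : Site}, wiredConn n σ0 x y → (C x ↔ C y) := by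
    intro x y hxy
    constructor
    · rintro (h | h)
      · exact Or.inl ((wiredConn_symm n σ0 hxy).trans h)
      · exact Or.inr ((wiredConn_symm n σ0 hxy).trans h)
    · rintro (h | h)
      · exact Or.inl (hxy.trans h)
      · exact Or.inr (hxy.trans h)
  set m : Cfg n → ℕ := fun η => max (extCfg n 4 η e.val.1) (extCfg n 4 η e.val.2) with hm
  have hm1 : ∀ η, 1 ≤ m η := fun η => le_trans (extCfg_pos n η e.val.1) (le_max_left _ _)
  have hm4 : ∀ η, m η ≤ 4 := fun η => max_le (extCfg_le_four n η _) (extCfg_le_four n η _)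
  set F : Cfg n → Cfg n :=
    fun η x => if C x.val then (⟨m η - 1, by have := hm4 η; omega⟩ : Fin 4) else η x with hF
  -- key formula for the extension of `F η`
  have hK1 : ∀ (η : Cfg n), ConstOnClusters n 4 σ0 η →
      ∀ x : Site, extCfg n 4 (F η) x = if C x then m η else extCfg n 4 η x := by
    intro η hη x
    by_cases hb : x ∈ box n
    · by_cases hc : C x
      · rw [if_pos hc]
        have h1 : extCfg n 4 (F η) x = (m η - 1) + 1 := by
          simp only [extCfg, dif_pos hb, hF, if_pos hc]
        rw [h1]
        have := hm1 η
        omega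
      · have h1 : extCfg n 4 (F η) x = extCfg n 4 η x := by
          simp only [extCfg, dif_pos hb, hF, if_neg hc]
        rw [h1, if_neg hc]
    · have hx4 : extCfg n 4 η x = 4 := by simp [extCfg, hb]
      have hFx4 : extCfg n 4 (F η) x = 4 := by simp [extCfg, hb]
      rw [hFx4]
      by_cases hc : C x
      · rw [if_pos hc]
        have hle4 := hm4 η
        rcases hc with h | h
        · have h1 := hη x e.val.1 h
          rw [hx4] at h1
          have h2 : extCfg n 4 η e.val.1 ≤ m η := le_max_left _ _
          omega
        · have h1 := hη x e.val.2 h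
          rw [hx4] at h1
          have h2 : extCfg n 4 η e.val.2 ≤ m η := le_max_right _ _
          omega
      · rw [if_neg hc, hx4]
  -- raising heights
  have hle : ∀ (η : Cfg n), ConstOnClusters n 4 σ0 η →
      ∀ x, extCfg n 4 η x ≤ extCfg n 4 (F η) x := by
    intro η hη x
    rw [hK1 η hη x]
    by_cases hc : C x
    · rw [if_pos hc]
      rcases hc with h | h
      · rw [hη x e.val.1 h]; exact le_max_left _ _
      · rw [hη x e.val.2 h]; exact le_max_right _ _
    · rw [if_neg hc]
  -- constancy along σ0-clusters for F η
  have hstep : ∀ (η : Cfg n), ConstOnClusters n 4 σ0 η → ∀ {u v : Site},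
      wiredConn n σ0 u v → extCfg n 4 (F η) u = extCfg n 4 (F η) v := by
    intro η hη u v huv
    rw [hK1 η hη u, hK1 η hη v]
    by_cases hc : C u
    · rw [if_pos hc, if_pos ((hCinv huv).mp hc)]
    · rw [if_neg hc, if_neg (fun h => hc ((hCinv huv).mpr h))]
      exact hη u v huv
  have hK3 : ∀ (η : Cfg n), ConstOnClusters n 4 σ0 η → ConstOnClusters n 4 σ1 (F η) := by
    intro η hη x y hxy
    induction hxy with
    | refl => rfl
    | @tail b c _ hadj ih =>
      refine ih.trans ?_
      have hends : ∀ u v : Site, u = e.val.1 → v = e.val.2 →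
          extCfg n 4 (F η) u = extCfg n 4 (F η) v := by
        intro u v hu hv
        rw [hK1 η hη u, hK1 η hη v, if_pos (hu ▸ hCe1), if_pos (hv ▸ hCe2)]
      rcases hadj with ⟨hmem, hval⟩ | ⟨hmem, hval⟩ | hbd
      · by_cases heq : (⟨(b, c), hmem⟩ : {e : Site × Site // e ∈ bonds n}) = e
        · have h2 : e.val = (b, c) := by rw [← heq]
          exact hends b c (by rw [h2]) (by rw [h2])
        · have hσ : σ0 ⟨(b, c), hmem⟩ = true := by
            rw [hσ0, Function.update_of_ne heq]
            rw [hσ1, Function.update_of_ne heq] at hval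
            exact hval
          exact hstep η hη (Relation.ReflTransGen.single (Or.inl ⟨hmem, hσ⟩))
      · by_cases heq : (⟨(c, b), hmem⟩ : {e : Site × Site // e ∈ bonds n}) = e
        · have h2 : e.val = (c, b) := by rw [← heq]
          exact (hends c b (by rw [h2]) (by rw [h2])).symm
        · have hσ : σ0 ⟨(c, b), hmem⟩ = true := by
            rw [hσ0, Function.update_of_ne heq]
            rw [hσ1, Function.update_of_ne heq] at hval
            exact hval
          exact hstep η hη (Relation.ReflTransGen.single (Or.inr (Or.inl ⟨hmem, hσ⟩)))
      · exact hstep η hη (Relation.ReflTransGen.single (Or.inr (Or.inr hbd)))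
  -- counting
  rw [kcount, kcount]
  refine Finset.card_le_mul_card_image_of_maps_to (f := F) ?_ 7 ?_
  · intro η hη
    rw [Finset.mem_filter] at hη ⊢
    obtain ⟨_, hburn, hconst⟩ := hη
    exact ⟨Finset.mem_univ _, burnable_mono (hle η hconst) hburn, hK3 η hconst⟩
  · intro ζ hζ
    set M : ℕ := extCfg n 4 ζ e.val.1 with hM
    set T : Finset (ℕ × ℕ) := ({M} ×ˢ Finset.Icc 1 4) ∪ (Finset.Icc 1 3 ×ˢ {M}) with hT
    have hTcard : T.card ≤ 7 := by
      refine (Finset.card_union_le _ _).trans ?_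
      rw [Finset.card_product, Finset.card_product]
      simp
    refine le_trans (Finset.card_le_card_of_injOn
      (fun η => (extCfg n 4 η e.val.1, extCfg n 4 η e.val.2)) ?_ ?_) hTcard
    · intro η hηf
      rw [Finset.mem_coe, Finset.mem_filter] at hηf
      obtain ⟨hηs, hFζ⟩ := hηf
      rw [Finset.mem_filter] at hηs
      obtain ⟨_, _, hconst⟩ := hηs
      have hMm : m η = M := by
        rw [hM, ← hFζ, hK1 η hconst e.val.1, if_pos hCe1]
      have ha1 := extCfg_pos n η e.val.1
      have ha4 := extCfg_le_four n η e.val.1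
      have hb1 := extCfg_pos n η e.val.2
      have hb4 := extCfg_le_four n η e.val.2
      have hmax1 : extCfg n 4 η e.val.1 ≤ m η := le_max_left _ _
      have hmax2 : extCfg n 4 η e.val.2 ≤ m η := le_max_right _ _
      have hchoice : m η = extCfg n 4 η e.val.1 ∨ m η = extCfg n 4 η e.val.2 :=
        max_choice _ _
      simp only [hT, Finset.mem_coe, Finset.mem_union, Finset.mem_product, Finset.mem_singleton,
        Finset.mem_Icc]
      omega
    · intro η1 h1 η2 h2 hpair
      simp only [Finset.coe_filter, Set.mem_setOf_eq, Finset.mem_filter] at h1 h2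
      obtain ⟨⟨_, _, hc1⟩, hF1⟩ := h1
      obtain ⟨⟨_, _, hc2⟩, hF2⟩ := h2
      have hpair1 : extCfg n 4 η1 e.val.1 = extCfg n 4 η2 e.val.1 :=
        congrArg Prod.fst hpair
      have hpair2 : extCfg n 4 η1 e.val.2 = extCfg n 4 η2 e.val.2 :=
        congrArg Prod.snd hpair
      funext x
      have hbox := x.2
      have hval : extCfg n 4 η1 x.val = extCfg n 4 η2 x.val := by
        by_cases hc : C x.val
        · rcases hc with h | h
          · rw [hc1 x.val e.val.1 h, hc2 x.val e.val.1 h, hpair1]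
          · rw [hc1 x.val e.val.2 h, hc2 x.val e.val.2 h, hpair2]
        · have hFx : F η1 x = F η2 x := by rw [hF1, hF2]
          simp only [hF, if_neg hc] at hFx
          simp only [extCfg, dif_pos hbox]
          exact congrArg (fun v : Fin 4 => (v : ℕ) + 1) hFx
      simp only [extCfg, dif_pos hbox] at hval
      have : (η1 ⟨x.val, hbox⟩ : ℕ) = (η2 ⟨x.val, hbox⟩ : ℕ) := by omega
      exact Fin.ext this

end SevenToOne

/-- In `φ_p^4`, the conditional probability that any edge is open given all
other edges is at least `p / (7 - 6p)`. -/
theorem conditional_edge_probability_lower_bound (n : ℕ)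
    (p : ℝ) (hp : 0 < p) (hp1 : p < 1)
    (σ : BondCfg n) (e : {e : Site × Site // e ∈ bonds n}) :
    p / (7 - 6 * p) ≤
      rcWeight n 4 p (Function.update σ e true) /
        (rcWeight n 4 p (Function.update σ e true) +
          rcWeight n 4 p (Function.update σ e false)) := by
  classical
  set W : ℝ := ∏ e' ∈ Finset.univ.erase e, (if σ e' then p else 1 - p) with hWdef
  have hW : (0 : ℝ) < W := by
    refine Finset.prod_pos ?_
    intro i _
    split <;> linarith
  have hbw : ∀ b : Bool,
      bweight n p (Function.update σ e b) = (if b then p else 1 - p) * W := by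
    intro b
    rw [bweight, ← Finset.mul_prod_erase Finset.univ _ (Finset.mem_univ e),
      Function.update_self]
    congr 1
    refine Finset.prod_congr rfl ?_
    intro x hx
    rw [Function.update_of_ne (Finset.ne_of_mem_erase hx)]
  clear_value W
  set k1 := kcount n 4 (Function.update σ e true) with hk1
  set k0 := kcount n 4 (Function.update σ e false) with hk0
  have hK1pos' := kcount_pos n (Function.update σ e true)
  have hK01' := seven_to_one n σ e
  rw [← hk1] at hK1pos'
  rw [← hk0, ← hk1] at hK01'
  clear_value k1 k0
  have hr1 : rcWeight n 4 p (Function.update σ e true) = p * W * (k1 : ℝ) := by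
    rw [rcWeight, hbw true, ← hk1, if_pos rfl]
  have hr0 : rcWeight n 4 p (Function.update σ e false) = (1 - p) * W * (k0 : ℝ) := by
    rw [rcWeight, hbw false, ← hk0, if_neg (by decide)]
  have hK1pos : (1 : ℝ) ≤ (k1 : ℝ) := by exact_mod_cast hK1pos'
  have hK0nn : (0 : ℝ) ≤ (k0 : ℝ) := Nat.cast_nonneg _
  have hK01 : (k0 : ℝ) ≤ 7 * (k1 : ℝ) := by exact_mod_cast hK01'
  rw [hr1, hr0]
  have hden : (0 : ℝ) < p * W * (k1 : ℝ) + (1 - p) * W * (k0 : ℝ) := by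
    have h1 : (0 : ℝ) ≤ p * W * ((k1 : ℝ) - 1) := by
      apply mul_nonneg (mul_pos hp hW).le
      linarith
    have h2 : (0 : ℝ) ≤ (1 - p) * W * (k0 : ℝ) := by
      apply mul_nonneg (mul_nonneg (by linarith) hW.le) hK0nn
    have h3 : (0:ℝ) < p * W := mul_pos hp hW
    have h4 : p * W * (k1 : ℝ) = p * W + p * W * ((k1 : ℝ) - 1) := by ring
    linarith
  rw [div_le_div_iff₀ (by linarith : (0:ℝ) < 7 - 6 * p) hden]
  have key : p * W * (k1:ℝ) * (7 - 6 * p) - p * (p * W * (k1:ℝ) + (1 - p) * W * (k0:ℝ))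
      = (p * W * (1 - p)) * (7 * (k1:ℝ) - (k0:ℝ)) := by ring
  have hn : (0:ℝ) ≤ (p * W * (1 - p)) * (7 * (k1:ℝ) - (k0:ℝ)) :=
    mul_nonneg (mul_nonneg (mul_nonneg hp.le hW.le) (by linarith)) (by linarith)
  linarith
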